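/- Let λ ∈ ℝ with 0 < λ < 1, ν ≠ 0, δ ≠ 0, and n ≥ 1 a natural number with δ n ν ∉ [−4, 0]. Then every complex eigenvalue z of the matrix Π · Df_n (with Π, Df_n as in the Arnold-model situation: Π has rows (1,0,0,0),(0,1,0,0),(δ,0,1,0),(0,0,0,1) and Df_n has rows (1,0,nν,0),(0,λ^n,0,0),(0,0,1,0),(0,0,0,λ^{-n})) satisfies |z| ≠ 1, i.e. the matrix is hyperbolic. -/

import Mathlib

open Matrix Polynomial

private lemma det4_helper (a b c d e f : ℂ) :
    (!![a,0,b,0; 0,c,0,0; d,0,e,0; 0,0,0,f] : Matrix (Fin 4) (Fin 4) ℂ).det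
      = c * f * (a * e - b * d) := by
  rw [Matrix.det_succ_row_zero]
  simp [Fin.sum_univ_succ, Matrix.det_fin_three, Fin.succAbove]
  ring

private lemma quad_no_unit_root (a : ℝ) (ha : 2 < |a|) (z : ℂ)
    (hz : z ^ 2 - (a : ℂ) * z + 1 = 0) : ‖z‖ ≠ 1 := by
  intro habs
  have hz0 : z ≠ 0 := by
    intro h; rw [h] at habs; simp at habs
  have hconj : z * (starRingEnd ℂ) z = 1 := by
    rw [Complex.mul_conj]
    norm_cast
    rw [Complex.normSq_eq_norm_sq, habs]; norm_num
  have hre : (a : ℂ) * z = ((2 * z.re : ℝ) : ℂ) * z := by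
    calc (a : ℂ) * z = z ^ 2 + 1 := by linear_combination -hz
      _ = z * (z + (starRingEnd ℂ) z) := by rw [mul_add, ← hconj]; ring
      _ = ((2 * z.re : ℝ) : ℂ) * z := by rw [Complex.add_conj]; push_cast; ring
  have haz : (a : ℂ) = ((2 * z.re : ℝ) : ℂ) := mul_right_cancel₀ hz0 hre
  have ha2 : a = 2 * z.re := by exact_mod_cast haz
  have h1 : |z.re| ≤ ‖z‖ := Complex.abs_re_le_norm z
  rw [habs] at h1
  rw [ha2, abs_mul] at ha
  simp only [abs_two] at ha
  linarith

theorem stmt_1 (lam ν δ : ℝ) (hlam : 0 < lam ∧ lam < 1) (hν : ν ≠ 0) (hδ : δ ≠ 0)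
    (n : ℕ) (hn : 1 ≤ n) (hδnν : δ * n * ν ∉ Set.Icc (-4 : ℝ) 0)
    (Pi : Matrix (Fin 4) (Fin 4) ℝ)
    (hPi : Pi = !![1,0,0,0; 0,1,0,0; δ,0,1,0; 0,0,0,1])
    (Df : Matrix (Fin 4) (Fin 4) ℝ)
    (hDf : Df = !![1,0,(n:ℝ)*ν,0; 0,lam^n,0,0; 0,0,1,0; 0,0,0,(lam^n)⁻¹]) :
    ∀ z : ℂ, ((Pi * Df).charpoly.map (algebraMap ℝ ℂ)).IsRoot z → ‖z‖ ≠ 1 := by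
  obtain ⟨hl0, hl1⟩ := hlam
  have htR : (0:ℝ) < lam ^ n := pow_pos hl0 n
  have htR1 : lam ^ n < 1 := pow_lt_one₀ hl0.le hl1 (by omega)
  have ht0 : ((lam : ℂ)) ^ n ≠ 0 := by
    exact_mod_cast ne_of_gt (show (0:ℝ) < lam ^ n from htR)
  have hM : Pi * Df = !![1,0,(n:ℝ)*ν,0; 0,lam^n,0,0; δ,0,δ*((n:ℝ)*ν)+1,0; 0,0,0,(lam^n)⁻¹] := by
    subst hPi hDf
    ext i j
    fin_cases i <;> fin_cases j <;>
      simp [Matrix.mul_apply, Fin.sum_univ_succ, Matrix.vecHead, Matrix.vecTail]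
  have key : ∀ z : ℂ, ((Pi * Df).charpoly.map (algebraMap ℝ ℂ)).eval z =
      (z ^ 2 - ((lam ^ n + (lam ^ n)⁻¹ : ℝ) : ℂ) * z + 1) *
      (z ^ 2 - ((δ * n * ν + 2 : ℝ) : ℂ) * z + 1) := by
    intro z
    rw [← Matrix.charpoly_map, Matrix.charpoly]
    have h1 : Polynomial.eval z ((charmatrix ((Pi * Df).map (algebraMap ℝ ℂ))).det) =
        ((charmatrix ((Pi * Df).map (algebraMap ℝ ℂ))).map (Polynomial.evalRingHom z)).det :=
      RingHom.map_det (Polynomial.evalRingHom z) _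
    have h2 : (charmatrix ((Pi * Df).map (algebraMap ℝ ℂ))).map (Polynomial.evalRingHom z) =
        !![z-1, 0, -((n:ℂ)*(ν:ℂ)), 0;
           0, z-(lam:ℂ)^n, 0, 0;
           -(δ:ℂ), 0, z-((δ:ℂ)*((n:ℂ)*(ν:ℂ))+1), 0;
           0, 0, 0, z-((lam:ℂ)^n)⁻¹] := by
      rw [hM]
      ext i j
      fin_cases i <;> fin_cases j <;>
        simp [charmatrix_apply, Matrix.diagonal, Matrix.map_apply,
          Matrix.vecHead, Matrix.vecTail]
    rw [h1, h2, det4_helper]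
    push_cast
    field_simp
    ring
  intro z hz habs
  have hzero := key z
  rw [Polynomial.IsRoot] at hz
  rw [hz] at hzero
  rcases mul_eq_zero.mp hzero.symm with h | h
  · have ha : 2 < |lam ^ n + (lam ^ n)⁻¹| := by
      have h2 : 2 < lam ^ n + (lam ^ n)⁻¹ := by
        have hne : lam ^ n - 1 ≠ 0 := by linarith
        have : (lam ^ n - 1) ^ 2 > 0 := by positivity
        have hinv : (lam ^ n) * (lam ^ n)⁻¹ = 1 := mul_inv_cancel₀ (ne_of_gt htR)
        nlinarith [mul_pos htR (inv_pos.mpr htR)]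
      rw [abs_of_pos (by linarith)]
      exact h2
    exact quad_no_unit_root _ ha z (by linear_combination h) habs
  · have ha : 2 < |δ * n * ν + 2| := by
      rw [Set.mem_Icc, not_and_or, not_le, not_le] at hδnν
      rcases hδnν with h4 | h0
      · rw [abs_of_neg (by linarith)]; linarith
      · rw [abs_of_pos (by linarith)]; linarith
    exact quad_no_unit_root _ ha z (by linear_combination h) habs
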